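/- For probability distributions q₀, q₁ on a finite set S and p ∈ [0,1], with q = p·q₀ + (1-p)·q₁, the mutual information I = p·D(q₀‖q) + (1-p)·D(q₁‖q) satisfies I ≥ -log₂[p² + (1-p)² + 2p(1-p)·F(q₀,q₁)], where F(q₀,q₁) = Σ_m √(q₀(m)q₁(m)) and D(·‖·) is the Kullback–Leibler divergence in bits. -/

import Mathlib

open Finset

/-- Kullback–Leibler divergence in bits, with conventions `0 * logb 2 0 = 0`
and division by zero equal to zero. -/
noncomputable def klDiv2 {S : Type} [Fintype S] (r s : S → ℝ) : ℝ :=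
  ∑ m, r m * Real.logb 2 (r m / s m)

/-- Key lemma: `D(r‖s) ≥ -2 log F(r,s)` (natural log version). -/
lemma klDiv_log_ge {S : Type} [Fintype S] (r s : S → ℝ)
    (hr : ∀ m, 0 ≤ r m) (hr1 : ∑ m, r m = 1)
    (hpos : ∀ m, 0 < r m → 0 < s m) :
    -2 * Real.log (∑ m, Real.sqrt (r m * s m)) ≤ ∑ m, r m * Real.log (r m / s m) := by
  set G := ∑ m, Real.sqrt (r m * s m) with hG
  set t : Finset S := Finset.univ.filter (fun m => 0 < r m) with ht
  have hts : ∀ m ∈ t, 0 < r m := fun m hm => (Finset.mem_filter.mp hm).2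
  have hoff : ∀ m ∈ (Finset.univ : Finset S), m ∉ t → r m = 0 := by
    intro m _ hm
    have h2 : ¬ 0 < r m := by simpa [ht] using hm
    linarith [hr m]
  have htsum : ∑ m ∈ t, r m = 1 := by
    rw [← hr1]
    exact Finset.sum_subset (Finset.subset_univ t) hoff
  have hz : ∀ m ∈ t, 0 < Real.sqrt (s m / r m) := by
    intro m hm
    exact Real.sqrt_pos.mpr (div_pos (hpos m (hts m hm)) (hts m hm))
  have amgm := Real.geom_mean_le_arith_mean_weighted t r (fun m => Real.sqrt (s m / r m))
    (fun m hm => (hts m hm).le) htsum (fun m hm => (hz m hm).le)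
  have hsum_eq : ∑ m ∈ t, r m * Real.sqrt (s m / r m) = ∑ m ∈ t, Real.sqrt (r m * s m) := by
    refine Finset.sum_congr rfl (fun m hm => ?_)
    have h1 := hts m hm
    rw [show r m * s m = (r m)^2 * (s m / r m) by field_simp,
      Real.sqrt_mul (sq_nonneg _), Real.sqrt_sq h1.le]
  have hsub : ∑ m ∈ t, Real.sqrt (r m * s m) ≤ G := by
    exact Finset.sum_le_sum_of_subset_of_nonneg (Finset.subset_univ t)
      (fun m _ _ => Real.sqrt_nonneg _)
  have hprodpos : 0 < ∏ m ∈ t, Real.sqrt (s m / r m) ^ (r m) :=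
    Finset.prod_pos (fun m hm => Real.rpow_pos_of_pos (hz m hm) _)
  have hchain : ∏ m ∈ t, Real.sqrt (s m / r m) ^ (r m) ≤ G := by
    calc ∏ m ∈ t, Real.sqrt (s m / r m) ^ (r m)
        ≤ ∑ m ∈ t, r m * Real.sqrt (s m / r m) := amgm
      _ = ∑ m ∈ t, Real.sqrt (r m * s m) := hsum_eq
      _ ≤ G := hsub
  have hlog : Real.log (∏ m ∈ t, Real.sqrt (s m / r m) ^ (r m)) ≤ Real.log G :=
    Real.log_le_log hprodpos hchain
  have hlogprod : Real.log (∏ m ∈ t, Real.sqrt (s m / r m) ^ (r m))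
      = ∑ m ∈ t, -(r m * Real.log (r m / s m)) / 2 := by
    rw [Real.log_prod (fun m hm => ne_of_gt (Real.rpow_pos_of_pos (hz m hm) _))]
    refine Finset.sum_congr rfl (fun m hm => ?_)
    rw [Real.log_rpow (hz m hm), Real.log_sqrt (div_nonneg (hpos m (hts m hm)).le (hts m hm).le),
      show s m / r m = (r m / s m)⁻¹ by rw [inv_div], Real.log_inv]
    ring
  have hfull : ∑ m, r m * Real.log (r m / s m) = ∑ m ∈ t, r m * Real.log (r m / s m) := by
    symm
    exact Finset.sum_subset (Finset.subset_univ t) (fun m hm h => by rw [hoff m hm h, zero_mul])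
  rw [hlogprod] at hlog
  rw [hfull]
  have : ∑ m ∈ t, -(r m * Real.log (r m / s m)) / 2
      = -(∑ m ∈ t, r m * Real.log (r m / s m)) / 2 := by
    rw [← Finset.sum_div, ← Finset.sum_neg_distrib]
  rw [this] at hlog
  linarith

theorem mutual_info_ge_neg_log_fid {S : Type} [Fintype S]
    (q0 q1 : S → ℝ) (h0 : ∀ m, 0 ≤ q0 m) (h1 : ∀ m, 0 ≤ q1 m)
    (hs0 : ∑ m, q0 m = 1) (hs1 : ∑ m, q1 m = 1)
    (p : ℝ) (hp : p ∈ Set.Icc (0:ℝ) 1) :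
    p * klDiv2 q0 (fun m => p * q0 m + (1-p) * q1 m) +
        (1-p) * klDiv2 q1 (fun m => p * q0 m + (1-p) * q1 m) ≥
      -Real.logb 2 (p^2 + (1-p)^2 + 2*p*(1-p) * ∑ m, Real.sqrt (q0 m * q1 m)) := by
  obtain ⟨hp0, hp1⟩ := hp
  have hlog2 : (0:ℝ) < Real.log 2 := Real.log_pos one_lt_two
  -- self-divergence is zero
  have hself : ∀ (r : S → ℝ), klDiv2 r r = 0 := by
    intro r
    refine Finset.sum_eq_zero (fun m _ => ?_)
    by_cases h : r m = 0
    · simp [h]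
    · rw [div_self h, Real.logb_one, mul_zero]
  rcases eq_or_lt_of_le hp0 with hpe | hppos
  · -- p = 0
    subst hpe
    rw [show (fun m => (0:ℝ) * q0 m + (1-0) * q1 m) = q1 by funext m; ring, hself]
    norm_num [Real.logb_one]
  rcases eq_or_lt_of_le hp1 with hpe | hplt
  · -- p = 1
    subst hpe
    rw [show (fun m => (1:ℝ) * q0 m + (1-1) * q1 m) = q0 by funext m; ring, hself]
    norm_num [Real.logb_one]
  -- main case 0 < p < 1
  set q : S → ℝ := fun m => p * q0 m + (1-p) * q1 m with hqdef
  have hq : ∀ m, 0 ≤ q m := fun m => by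
    have := h0 m; have := h1 m
    show (0:ℝ) ≤ p * q0 m + (1-p) * q1 m
    nlinarith
  have hqsum : ∑ m, q m = 1 := by
    simp only [hqdef]
    rw [Finset.sum_add_distrib, ← Finset.mul_sum, ← Finset.mul_sum, hs0, hs1]; ring
  set F := ∑ m, Real.sqrt (q0 m * q1 m) with hF
  set B := p^2 + (1-p)^2 + 2*p*(1-p) * F with hB
  have hFnn : 0 ≤ F := Finset.sum_nonneg (fun m _ => Real.sqrt_nonneg _)
  have hBpos : 0 < B := by
    have h2 : (0:ℝ) ≤ 2*p*(1-p) * F :=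
      mul_nonneg (mul_nonneg (mul_nonneg (by norm_num) hp0) (by linarith)) hFnn
    have h3 : (0:ℝ) < p^2 := pow_pos hppos 2
    have h4 : (0:ℝ) ≤ (1-p)^2 := sq_nonneg _
    rw [hB]; linarith
  set F0 := ∑ m, Real.sqrt (q0 m * q m) with hF0
  set F1 := ∑ m, Real.sqrt (q1 m * q m) with hF1
  -- positivity of F0, F1
  have hex0 : ∃ m, q0 m ≠ 0 := by
    by_contra h; push_neg at h
    rw [Finset.sum_eq_zero (fun m _ => h m)] at hs0; norm_num at hs0
  have hex1 : ∃ m, q1 m ≠ 0 := by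
    by_contra h; push_neg at h
    rw [Finset.sum_eq_zero (fun m _ => h m)] at hs1; norm_num at hs1
  have hq_of_q0 : ∀ m, 0 < q0 m → 0 < q m := by
    intro m hm; have := h1 m
    show (0:ℝ) < p * q0 m + (1-p) * q1 m
    nlinarith
  have hq_of_q1 : ∀ m, 0 < q1 m → 0 < q m := by
    intro m hm; have := h0 m
    show (0:ℝ) < p * q0 m + (1-p) * q1 m
    nlinarith
  have hF0pos : 0 < F0 := by
    obtain ⟨m, hm⟩ := hex0
    have hm' : 0 < q0 m := (h0 m).lt_of_ne (Ne.symm hm)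
    exact Finset.sum_pos' (fun i _ => Real.sqrt_nonneg _)
      ⟨m, Finset.mem_univ m, Real.sqrt_pos.mpr (mul_pos hm' (hq_of_q0 m hm'))⟩
  have hF1pos : 0 < F1 := by
    obtain ⟨m, hm⟩ := hex1
    have hm' : 0 < q1 m := (h1 m).lt_of_ne (Ne.symm hm)
    exact Finset.sum_pos' (fun i _ => Real.sqrt_nonneg _)
      ⟨m, Finset.mem_univ m, Real.sqrt_pos.mpr (mul_pos hm' (hq_of_q1 m hm'))⟩
  -- key lemma applied twice
  have hK0 := klDiv_log_ge q0 q h0 hs0 hq_of_q0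
  have hK1 := klDiv_log_ge q1 q h1 hs1 hq_of_q1
  set K0 := ∑ m, q0 m * Real.log (q0 m / q m) with hK0d
  set K1 := ∑ m, q1 m * Real.log (q1 m / q m) with hK1d
  -- concavity of log at two points
  have hA : 0 < p * F0 + (1-p) * F1 := by nlinarith
  have hconc : p * Real.log F0 + (1-p) * Real.log F1 ≤ Real.log (p * F0 + (1-p) * F1) := by
    have := (strictConcaveOn_log_Ioi.concaveOn).2 (Set.mem_Ioi.mpr hF0pos)
      (Set.mem_Ioi.mpr hF1pos) hp0 (by linarith : (0:ℝ) ≤ 1 - p) (by ring)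
    simpa using this
  -- Cauchy-Schwarz step
  have hAeq : p * F0 + (1-p) * F1
      = ∑ m, (p * Real.sqrt (q0 m) + (1-p) * Real.sqrt (q1 m)) * Real.sqrt (q m) := by
    rw [hF0, hF1, Finset.mul_sum, Finset.mul_sum, ← Finset.sum_add_distrib]
    refine Finset.sum_congr rfl (fun m _ => ?_)
    rw [Real.sqrt_mul (h0 m), Real.sqrt_mul (h1 m)]; ring
  have hsqsum : ∑ m, (p * Real.sqrt (q0 m) + (1-p) * Real.sqrt (q1 m))^2 = B := by
    have : ∀ m, (p * Real.sqrt (q0 m) + (1-p) * Real.sqrt (q1 m))^2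
        = p^2 * q0 m + (1-p)^2 * q1 m + 2*p*(1-p) * Real.sqrt (q0 m * q1 m) := by
      intro m
      rw [Real.sqrt_mul (h0 m)]
      have e0 : Real.sqrt (q0 m) ^ 2 = q0 m := Real.sq_sqrt (h0 m)
      have e1 : Real.sqrt (q1 m) ^ 2 = q1 m := Real.sq_sqrt (h1 m)
      nlinarith [e0, e1]
    rw [Finset.sum_congr rfl (fun m _ => this m)]
    rw [Finset.sum_add_distrib, Finset.sum_add_distrib, ← Finset.mul_sum, ← Finset.mul_sum,
      ← Finset.mul_sum, hs0, hs1, hB, hF]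
    ring
  have hqq : ∑ m, Real.sqrt (q m) ^ 2 = 1 := by
    rw [Finset.sum_congr rfl (fun m _ => Real.sq_sqrt (hq m)), hqsum]
  have hCS : p * F0 + (1-p) * F1 ≤ Real.sqrt B := by
    rw [Real.le_sqrt hA.le hBpos.le, hAeq]
    calc (∑ m, (p * Real.sqrt (q0 m) + (1-p) * Real.sqrt (q1 m)) * Real.sqrt (q m))^2
        ≤ (∑ m, (p * Real.sqrt (q0 m) + (1-p) * Real.sqrt (q1 m))^2) * ∑ m, Real.sqrt (q m) ^ 2 :=
          Finset.sum_mul_sq_le_sq_mul_sq _ _ _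
      _ = B := by rw [hsqsum, hqq, mul_one]
  have hlogCS : Real.log (p * F0 + (1-p) * F1) ≤ Real.log B / 2 := by
    calc Real.log (p * F0 + (1-p) * F1) ≤ Real.log (Real.sqrt B) := Real.log_le_log hA hCS
      _ = Real.log B / 2 := Real.log_sqrt hBpos.le
  -- main inequality in natural log
  have hmain : -Real.log B ≤ p * K0 + (1-p) * K1 := by
    have m0 : p * (-2 * Real.log F0) ≤ p * K0 :=
      mul_le_mul_of_nonneg_left hK0 hp0
    have m1 : (1-p) * (-2 * Real.log F1) ≤ (1-p) * K1 :=
      mul_le_mul_of_nonneg_left hK1 (by linarith)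
    linarith
  -- convert to logb
  have econv : ∀ (r : S → ℝ), klDiv2 r q = (∑ m, r m * Real.log (r m / q m)) / Real.log 2 := by
    intro r
    unfold klDiv2
    simp_rw [Real.logb, ← mul_div_assoc]
    rw [← Finset.sum_div]
  rw [ge_iff_le, econv q0, econv q1, ← hK0d, ← hK1d, Real.logb,
    show p * (K0 / Real.log 2) + (1-p) * (K1 / Real.log 2)
      = (p * K0 + (1-p) * K1) / Real.log 2 by ring, ← neg_div]
  exact (div_le_div_iff_of_pos_right hlog2).mpr hmain
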